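/- arXiv:2412.16675 — 2 statements merged into one kernel-verified Lean document; each statement's English description precedes it below -/
import Mathlib

section
/- Let f be a nonnegative arithmetic function with ∑_{n ≤ t} f(n) ≪ t (log log t)^β for all t ≥ 3, and let r ≥ 2. Then ∑_{d ≤ x} f(d)·(x/d)^{1−1/r}·(log(x/d))^{r−2} ≪ x (log x)^{r−2} (log log x)^β. -/
open Filter Asymptotics Real


lemma key_rpow (r : ℕ) (hr : 1 ≤ r) (t : ℝ) (ht : 1 ≤ t) :
    t ^ ((1:ℝ)/r - 1) ≤ r * (t ^ ((1:ℝ)/r) - (t-1) ^ ((1:ℝ)/r)) := by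
  have hr0 : (0:ℝ) < r := by positivity
  have ht0 : (0:ℝ) < t := by linarith
  set u : ℝ := 1/t with hu
  have hu0 : 0 < u := by positivity
  have hu1 : u ≤ 1 := by rw [hu]; rw [div_le_one ht0]; linarith
  have hur : u / r ≤ 1 := by
    have : (1:ℝ) ≤ r := by exact_mod_cast hr
    calc u / r ≤ 1 / r := by gcongr
    _ ≤ 1 := by rw [div_le_one hr0]; exact this
  have hber : 1 - u ≤ (1 - u/r)^r := by
    have h := one_add_mul_le_pow (a := -(u/r)) (by nlinarith) r
    have e1 : 1 + (r:ℝ) * (-(u/r)) = 1 - u := by field_simp; ring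
    have e2 : 1 + -(u/(r:ℝ)) = 1 - u/r := by ring
    rw [e1, e2] at h
    exact h
  have h2 : (1 - u) ^ ((1:ℝ)/r) ≤ 1 - u/r := by
    have h1u : (0:ℝ) ≤ 1 - u := by linarith
    have h1ur : (0:ℝ) ≤ 1 - u/r := by linarith
    calc (1-u) ^ ((1:ℝ)/r) ≤ ((1 - u/r)^r) ^ ((1:ℝ)/r) := by
          apply Real.rpow_le_rpow h1u hber (by positivity)
      _ = (1 - u/r) ^ ((r:ℝ) * ((1:ℝ)/r)) := by
          rw [← Real.rpow_natCast (1 - u/r) r, ← Real.rpow_mul h1ur]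
      _ = 1 - u/r := by
          rw [mul_one_div, div_self (ne_of_gt hr0), Real.rpow_one]
  have ht1 : t - 1 = t * (1 - u) := by rw [hu]; field_simp
  have h3 : (t-1) ^ ((1:ℝ)/r) ≤ t ^ ((1:ℝ)/r) * (1 - u/r) := by
    rw [ht1, Real.mul_rpow (le_of_lt ht0) (by linarith)]
    exact mul_le_mul_of_nonneg_left h2 (by positivity)
  have h4 : t ^ ((1:ℝ)/r) * u = t ^ ((1:ℝ)/r - 1) := by
    rw [Real.rpow_sub ht0, Real.rpow_one, hu]
    ring
  have h5 : t ^ ((1:ℝ)/r) - (t-1)^((1:ℝ)/r) ≥ t ^ ((1:ℝ)/r) * u / r := by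
    have : t ^ ((1:ℝ)/r) * (1 - u/r) = t ^ ((1:ℝ)/r) - t ^ ((1:ℝ)/r) * u / r := by ring
    nlinarith [h3]
  calc t ^ ((1:ℝ)/r - 1) = r * (t ^ ((1:ℝ)/r) * u / r) := by
        rw [← h4]; field_simp
    _ ≤ r * (t ^ ((1:ℝ)/r) - (t-1) ^ ((1:ℝ)/r)) := by
        apply mul_le_mul_of_nonneg_left h5 (le_of_lt hr0)

lemma sum_rpow_le (r : ℕ) (hr : 1 ≤ r) (N : ℕ) :
    ∑ d ∈ Finset.Icc 1 N, (d:ℝ) ^ ((1:ℝ)/r - 1) ≤ r * (N:ℝ) ^ ((1:ℝ)/r) := by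
  induction N with
  | zero =>
    simp only [Finset.Icc_self, Nat.cast_zero]
    norm_num
    exact mul_nonneg (Nat.cast_nonneg r) (Real.rpow_nonneg le_rfl _)
  | succ N ih =>
    rw [Finset.sum_Icc_succ_top (by omega)]
    have hkey := key_rpow r hr ((N:ℝ)+1) (by linarith [Nat.cast_nonneg (α := ℝ) N])
    have hc : ((N:ℝ)+1) - 1 = (N:ℝ) := by ring
    rw [hc] at hkey
    push_cast
    push_cast at ih
    nlinarith [hkey, ih]

lemma abel_aux (a w : ℕ → ℝ) (A : ℝ) :
    ∀ N : ℕ, (∀ k, 1 ≤ k → k < N → w (k+1) ≤ w k) →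
    (∀ k, 1 ≤ k → k ≤ N → (∑ n ∈ Finset.Icc 1 k, a n) ≤ A * k) →
    ∑ d ∈ Finset.Icc 1 N, a d * w d ≤
      A * ∑ d ∈ Finset.Icc 1 N, w d - (A * N - ∑ n ∈ Finset.Icc 1 N, a n) * w N := by
  intro N
  induction N with
  | zero => intro _ _; simp
  | succ N ih =>
    intro hw hS
    have ih' := ih (fun k hk hk' => hw k hk (by omega)) (fun k hk hk' => hS k hk (by omega))
    rw [Finset.sum_Icc_succ_top (by omega : 1 ≤ N + 1),
        Finset.sum_Icc_succ_top (by omega : 1 ≤ N + 1),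
        Finset.sum_Icc_succ_top (by omega : 1 ≤ N + 1)]
    rcases Nat.eq_zero_or_pos N with h0 | hpos
    · subst h0
      rw [show Finset.Icc 1 0 = ∅ by decide]
      simp only [Finset.sum_empty, Nat.cast_one, zero_add]
      nlinarith []
    · have hwm : w (N+1) ≤ w N := hw N hpos (by omega)
      have hSN : (∑ n ∈ Finset.Icc 1 N, a n) ≤ A * N := hS N hpos (by omega)
      push_cast
      push_cast at ih'
      nlinarith [mul_le_mul_of_nonneg_left hwm (sub_nonneg.2 hSN)]

/-- If `f ≥ 0` and `∑_{n ≤ t} f(n) ≪ t (log log t)^β` for `t ≥ 3`, and `r ≥ 2`,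
then `∑_{d ≤ x} f(d)·(x/d)^(1−1/r)·(log(x/d))^(r−2) ≪ x (log x)^(r−2) (log log x)^β`. -/
theorem weighted_sum_bound (f : ℕ → ℝ) (hfpos : ∀ n, 0 ≤ f n) (β : ℝ) (hβ : 0 ≤ β)
    (r : ℕ) (hr : 2 ≤ r)
    (hsum : ∃ K : ℝ, ∀ t : ℝ, 3 ≤ t →
      (∑ n ∈ Finset.Icc 1 ⌊t⌋₊, f n) ≤ K * t * (Real.log (Real.log t)) ^ β) :
    ∃ C : ℝ, ∀ x : ℝ, 3 ≤ x →
      (∑ d ∈ Finset.Icc 1 ⌊x⌋₊,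
        f d * (x / d) ^ (1 - 1 / (r : ℝ)) * (Real.log (x / d)) ^ (r - 2)) ≤
      C * x * (Real.log x) ^ (r - 2) * (Real.log (Real.log x)) ^ β := by
  obtain ⟨K, hK⟩ := hsum
  have h3 : (1:ℝ) < Real.log 3 := by
    rw [Real.lt_log_iff_exp_lt (by norm_num)]
    calc Real.exp 1 < 2.7182818286 := Real.exp_one_lt_d9
      _ < 3 := by norm_num
  have hll3 : 0 < Real.log (Real.log 3) := Real.log_pos h3
  have hll3β : 0 < (Real.log (Real.log 3)) ^ β := Real.rpow_pos_of_pos hll3 β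
  have hK0 : 0 ≤ K := by
    by_contra hneg
    push_neg at hneg
    have h1 := hK 3 le_rfl
    have h2 : 0 ≤ ∑ n ∈ Finset.Icc 1 ⌊(3:ℝ)⌋₊, f n :=
      Finset.sum_nonneg fun n _ => hfpos n
    nlinarith
  have hr0 : (0:ℝ) < r := by positivity
  have hr1 : 1 ≤ r := by omega
  refine ⟨3 * K * r, fun x hx => ?_⟩
  set N := ⌊x⌋₊ with hNdef
  have hxpos : (0:ℝ) < x := by linarith
  have hNx : (N:ℝ) ≤ x := Nat.floor_le (le_of_lt hxpos)
  have hN3 : 3 ≤ N := Nat.le_floor (by exact_mod_cast hx)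
  have hlog3x : Real.log 3 ≤ Real.log x := Real.log_le_log (by norm_num) hx
  have hlogx1 : 1 < Real.log x := lt_of_lt_of_le h3 hlog3x
  have hllx : Real.log (Real.log 3) ≤ Real.log (Real.log x) :=
    Real.log_le_log (by linarith) hlog3x
  have hllx0 : 0 < Real.log (Real.log x) := lt_of_lt_of_le hll3 hllx
  set L : ℝ := (Real.log (Real.log x)) ^ β with hLdef
  have hL3 : (Real.log (Real.log 3)) ^ β ≤ L := Real.rpow_le_rpow (le_of_lt hll3) hllx hβ
  have hL0 : 0 < L := Real.rpow_pos_of_pos hllx0 β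
  set A : ℝ := 3 * K * L with hAdef
  have hA0 : 0 ≤ A := by positivity
  set s : ℝ := 1 - 1/(r:ℝ) with hsdef
  have hs0 : 0 ≤ s := by
    rw [hsdef, sub_nonneg, div_le_one hr0]
    exact_mod_cast hr1
  set w : ℕ → ℝ := fun d => (x / d) ^ s * (Real.log (x / d)) ^ (r - 2) with hwdef
  -- basic facts about x/d for 1 ≤ d ≤ N
  have hxd1 : ∀ d : ℕ, 1 ≤ d → d ≤ N → 1 ≤ x / d := by
    intro d hd1 hdN
    have hd0 : (0:ℝ) < d := by exact_mod_cast hd1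
    rw [one_le_div hd0]
    calc (d:ℝ) ≤ N := by exact_mod_cast hdN
      _ ≤ x := hNx
  -- antitone on [1, N]
  have hw_anti : ∀ k, 1 ≤ k → k < N → w (k+1) ≤ w k := by
    intro k hk1 hkN
    have hk0 : (0:ℝ) < k := by exact_mod_cast hk1
    have ha1 : 1 ≤ x / (k+1:ℕ) := hxd1 (k+1) (by omega) (by omega)
    have hab : x / (k+1:ℕ) ≤ x / k := by
      apply div_le_div_of_nonneg_left (le_of_lt hxpos) hk0
      push_cast; linarith
    have ha0 : (0:ℝ) ≤ x / (k+1:ℕ) := by linarith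
    have hla : 0 ≤ Real.log (x / (k+1:ℕ)) := Real.log_nonneg ha1
    have hlab : Real.log (x / (k+1:ℕ)) ≤ Real.log (x / k) :=
      Real.log_le_log (by linarith) hab
    apply mul_le_mul (Real.rpow_le_rpow ha0 hab hs0)
      (pow_le_pow_left₀ hla hlab _) (pow_nonneg hla _)
      (Real.rpow_nonneg (by linarith) _)
  -- partial sums bound
  have hS : ∀ k, 1 ≤ k → k ≤ N → (∑ n ∈ Finset.Icc 1 k, f n) ≤ A * k := by
    intro k hk1 hkN
    rcases le_or_gt 3 k with hk3 | hk3
    · have hcast : (3:ℝ) ≤ (k:ℝ) := by exact_mod_cast hk3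
      have h1 := hK (k:ℝ) hcast
      rw [Nat.floor_natCast] at h1
      have hlk : Real.log 3 ≤ Real.log k := Real.log_le_log (by norm_num) hcast
      have hlkx : Real.log k ≤ Real.log x := by
        apply Real.log_le_log (by linarith)
        calc (k:ℝ) ≤ N := by exact_mod_cast hkN
          _ ≤ x := hNx
      have hllk0 : 0 ≤ Real.log (Real.log k) := by
        calc (0:ℝ) ≤ Real.log (Real.log 3) := le_of_lt hll3
          _ ≤ Real.log (Real.log k) := Real.log_le_log (by linarith) hlk
      have hllkx : Real.log (Real.log k) ≤ Real.log (Real.log x) :=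
        Real.log_le_log (by linarith) hlkx
      have hLk : (Real.log (Real.log k)) ^ β ≤ L := Real.rpow_le_rpow hllk0 hllkx hβ
      have hk0 : (0:ℝ) ≤ k := by positivity
      calc (∑ n ∈ Finset.Icc 1 k, f n) ≤ K * k * (Real.log (Real.log k)) ^ β := h1
        _ ≤ K * k * L := by
            apply mul_le_mul_of_nonneg_left hLk (by positivity)
        _ ≤ A * k := by rw [hAdef]; nlinarith
    · have hsub : (∑ n ∈ Finset.Icc 1 k, f n) ≤ ∑ n ∈ Finset.Icc 1 3, f n := by
        apply Finset.sum_le_sum_of_subset_of_nonneg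
        · apply Finset.Icc_subset_Icc_right (by omega)
        · intro i _ _; exact hfpos i
      have h1 := hK 3 le_rfl
      rw [show ⌊(3:ℝ)⌋₊ = 3 by norm_num] at h1
      have hcast : (1:ℝ) ≤ (k:ℝ) := by exact_mod_cast hk1
      calc (∑ n ∈ Finset.Icc 1 k, f n) ≤ ∑ n ∈ Finset.Icc 1 3, f n := hsub
        _ ≤ K * 3 * (Real.log (Real.log 3)) ^ β := h1
        _ ≤ 3 * K * L := by nlinarith
        _ = A * 1 := by rw [hAdef]; ring
        _ ≤ A * k := by apply mul_le_mul_of_nonneg_left hcast hA0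
  -- Abel summation
  have habel := abel_aux f w A N hw_anti hS
  have hwN0 : 0 ≤ w N := by
    have h1 := hxd1 N (by omega) le_rfl
    apply mul_nonneg (Real.rpow_nonneg (by linarith) _)
      (pow_nonneg (Real.log_nonneg h1) _)
  have hslack : 0 ≤ (A * N - ∑ n ∈ Finset.Icc 1 N, f n) * w N := by
    apply mul_nonneg _ hwN0
    have := hS N (by omega) le_rfl
    linarith
  -- bound on ∑ w d
  set P : ℝ := (Real.log x) ^ (r - 2) with hPdef
  have hP0 : 0 ≤ P := by positivity
  have hwsum : ∑ d ∈ Finset.Icc 1 N, w d ≤ (∑ d ∈ Finset.Icc 1 N, (x/d) ^ s) * P := by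
    rw [Finset.sum_mul]
    apply Finset.sum_le_sum
    intro d hd
    show w d ≤ (x/d) ^ s * P
    rw [Finset.mem_Icc] at hd
    have hd1 := hxd1 d hd.1 hd.2
    have hxd : x / d ≤ x := by
      apply div_le_self (le_of_lt hxpos)
      exact_mod_cast hd.1
    have hlog : Real.log (x/d) ≤ Real.log x := Real.log_le_log (by linarith) hxd
    apply mul_le_mul_of_nonneg_left _ (Real.rpow_nonneg (by linarith) _)
    exact pow_le_pow_left₀ (Real.log_nonneg hd1) hlog _
  -- rewrite ∑ (x/d)^s
  have hfact : ∑ d ∈ Finset.Icc 1 N, (x/d) ^ s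
      = x ^ s * ∑ d ∈ Finset.Icc 1 N, (d:ℝ) ^ ((1:ℝ)/r - 1) := by
    rw [Finset.mul_sum]
    apply Finset.sum_congr rfl
    intro d hd
    rw [Finset.mem_Icc] at hd
    have hd0 : (0:ℝ) < d := by exact_mod_cast hd.1
    rw [Real.div_rpow (le_of_lt hxpos) (le_of_lt hd0), div_eq_mul_inv,
        ← Real.rpow_neg (le_of_lt hd0)]
    congr 1
    rw [hsdef]; ring
  have hdpow : ∑ d ∈ Finset.Icc 1 N, (d:ℝ) ^ ((1:ℝ)/r - 1) ≤ r * x ^ ((1:ℝ)/r) := by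
    calc ∑ d ∈ Finset.Icc 1 N, (d:ℝ) ^ ((1:ℝ)/r - 1) ≤ r * (N:ℝ) ^ ((1:ℝ)/r) :=
          sum_rpow_le r hr1 N
      _ ≤ r * x ^ ((1:ℝ)/r) := by
          apply mul_le_mul_of_nonneg_left
            (Real.rpow_le_rpow (Nat.cast_nonneg N) hNx (by positivity)) (le_of_lt hr0)
  have hxx : x ^ s * x ^ ((1:ℝ)/r) = x := by
    rw [← Real.rpow_add hxpos, hsdef]
    norm_num
  -- combine
  calc (∑ d ∈ Finset.Icc 1 N,
        f d * (x / d) ^ (1 - 1 / (r : ℝ)) * (Real.log (x / d)) ^ (r - 2))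
      = ∑ d ∈ Finset.Icc 1 N, f d * w d := by
        apply Finset.sum_congr rfl
        intro d _
        rw [hwdef, hsdef]
        ring
    _ ≤ A * ∑ d ∈ Finset.Icc 1 N, w d - (A * N - ∑ n ∈ Finset.Icc 1 N, f n) * w N :=
        habel
    _ ≤ A * ∑ d ∈ Finset.Icc 1 N, w d := by linarith
    _ ≤ A * ((∑ d ∈ Finset.Icc 1 N, (x/d) ^ s) * P) := mul_le_mul_of_nonneg_left hwsum hA0
    _ = A * P * (x ^ s * ∑ d ∈ Finset.Icc 1 N, (d:ℝ) ^ ((1:ℝ)/r - 1)) := by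
        rw [hfact]; ring
    _ ≤ A * P * (x ^ s * (r * x ^ ((1:ℝ)/r))) := by
        apply mul_le_mul_of_nonneg_left _ (by positivity)
        exact mul_le_mul_of_nonneg_left hdpow (Real.rpow_nonneg (le_of_lt hxpos) _)
    _ = A * P * (r * x) := by rw [show x ^ s * ((r:ℝ) * x ^ ((1:ℝ)/r)) = (r:ℝ) * (x ^ s * x ^ ((1:ℝ)/r)) by ring, hxx]
    _ = 3 * K * r * x * P * L := by rw [hAdef]; ring
end

section
/- Let g be an arithmetic function with g(0) = 0, g(1) ≠ 0, and g(n) = O(2^{n/2}), and define f(n) = ∑_{p^a ∥ n} g(a). Then ∑_{n ≤ x} f(n) ≪ x log log x for x ≥ 3. -/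
open Filter Asymptotics Real

open Finset

lemma countL (N m : ℕ) : ((((Finset.Icc 1 N)).filter (fun n => m ∣ n)).card : ℝ) ≤ (N : ℝ) / m := by
  have h : Finset.Icc 1 N = Finset.Ioc 0 N := rfl
  rw [h, Nat.Ioc_filter_dvd_card_eq_div]
  exact Nat.cast_div_le

lemma geomL {r : ℝ} (h0 : 0 ≤ r) (h1 : r < 1) (N : ℕ) :
    ∑ a ∈ Finset.Icc 1 N, r ^ a ≤ r / (1 - r) := by
  have hs : ∑ a ∈ Finset.Icc 1 N, r ^ a = r * ∑ i ∈ Finset.range N, r ^ i := by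
    rw [Finset.mul_sum]
    rw [show Finset.Icc 1 N = Finset.Ico 1 (N+1) from rfl, Finset.sum_Ico_eq_sum_range]
    simp [pow_succ, mul_comm, pow_add]
  rw [hs]
  have hr : (0:ℝ) < 1 - r := by linarith
  have hg : ∑ i ∈ Finset.range N, r ^ i ≤ 1 / (1 - r) := by
    rw [geom_sum_eq h1.ne N, show (r^N-1)/(r-1) = (1-r^N)/(1-r) by rw [← neg_div_neg_eq]; ring_nf]
    have : (0:ℝ) ≤ r ^ N := pow_nonneg h0 N
    gcongr
    linarith
  calc r * ∑ i ∈ Finset.range N, r ^ i ≤ r * (1 / (1 - r)) := by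
        exact mul_le_mul_of_nonneg_left hg h0
    _ = r / (1 - r) := by ring

lemma blockL (j : ℕ) (F : Finset ℕ) (hF : ∀ p ∈ F, p.Prime ∧ 2^j ≤ p ∧ p < 2^(j+1)) :
    j * F.card ≤ 2^(j+2) := by
  have h1 : (2^j)^F.card ≤ ∏ p ∈ F, p :=
    Finset.pow_card_le_prod _ _ _ (fun p hp => (hF p hp).2.1)
  have h2 : ∏ p ∈ F, p ≤ primorial (2^(j+1) - 1) := by
    apply Finset.prod_le_prod_of_subset_of_one_le'
    · intro p hp
      simp only [Finset.mem_filter, Finset.mem_range]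
      have h5 := hF p hp
      have h6 : 1 ≤ 2^(j+1) := Nat.one_le_two_pow
      exact ⟨by omega, h5.1⟩
    · intro i hi _
      exact (Finset.mem_filter.mp hi).2.one_lt.le
  have h3 : primorial (2^(j+1) - 1) ≤ 4 ^ (2^(j+1)) :=
    (primorial_le_4_pow _).trans (Nat.pow_le_pow_right (by norm_num) (Nat.sub_le _ _))
  have h4 : (2:ℕ)^(j * F.card) ≤ 2^(2^(j+2)) := by
    calc (2:ℕ)^(j * F.card) = (2^j)^F.card := by rw [pow_mul]
    _ ≤ primorial (2^(j+1) - 1) := h1.trans h2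
    _ ≤ 4 ^ (2^(j+1)) := h3
    _ = 2^(2^(j+2)) := by
        rw [show (4:ℕ) = 2^2 from rfl, ← pow_mul]
        congr 1
        ring
  exact (Nat.pow_le_pow_iff_right (by norm_num)).mp h4

lemma recipL (M : ℕ) :
    ∑ p ∈ M.primesBelow, ((p:ℝ))⁻¹ ≤ 4 * (1 + Real.log (Nat.log 2 M)) := by
  set J := Nat.log 2 M with hJ
  have maps : ∀ p ∈ M.primesBelow, Nat.log 2 p ∈ Finset.Icc 1 J := by
    intro p hp
    rw [Nat.mem_primesBelow] at hp
    rw [Finset.mem_Icc]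
    exact ⟨Nat.log_pos one_lt_two hp.2.two_le, Nat.log_mono_right hp.1.le⟩
  rw [← Finset.sum_fiberwise_of_maps_to maps (fun p => ((p:ℝ))⁻¹)]
  have hfib : ∀ j ∈ Finset.Icc 1 J,
      ∑ p ∈ M.primesBelow.filter (fun p => Nat.log 2 p = j), ((p:ℝ))⁻¹ ≤ 4 * ((j:ℝ))⁻¹ := by
    intro j hj
    rw [Finset.mem_Icc] at hj
    have hj0 : (0:ℝ) < j := by exact_mod_cast hj.1
    set F := M.primesBelow.filter (fun p => Nat.log 2 p = j) with hF
    have hFmem : ∀ p ∈ F, p.Prime ∧ 2^j ≤ p ∧ p < 2^(j+1) := by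
      intro p hp
      rw [hF, Finset.mem_filter, Nat.mem_primesBelow] at hp
      refine ⟨hp.1.2, ?_, ?_⟩
      · rw [← hp.2]; exact Nat.pow_log_le_self 2 hp.1.2.pos.ne'
      · rw [← hp.2]; exact Nat.lt_pow_succ_log_self one_lt_two p
    have hcard : j * F.card ≤ 2^(j+2) := blockL j F hFmem
    have hcardR : (F.card : ℝ) ≤ 2^(j+2) / j := by
      rw [le_div_iff₀ hj0, mul_comm]
      exact_mod_cast hcard
    have hterm : ∀ p ∈ F, ((p:ℝ))⁻¹ ≤ ((2:ℝ)^j)⁻¹ := by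
      intro p hp
      have h2 := (hFmem p hp).2.1
      have : ((2:ℝ)^j) ≤ (p:ℝ) := by exact_mod_cast h2
      exact inv_anti₀ (by positivity) this
    calc ∑ p ∈ F, ((p:ℝ))⁻¹ ≤ F.card • ((2:ℝ)^j)⁻¹ := Finset.sum_le_card_nsmul F _ _ hterm
      _ = (F.card : ℝ) * ((2:ℝ)^j)⁻¹ := by simp
      _ ≤ (2^(j+2) / (j:ℝ)) * ((2:ℝ)^j)⁻¹ := by gcongr
      _ = 4 * ((j:ℝ))⁻¹ := by
          rw [pow_add]
          field_simp
          ring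
  calc ∑ j ∈ Finset.Icc 1 J, ∑ p ∈ M.primesBelow.filter (fun p => Nat.log 2 p = j), ((p:ℝ))⁻¹
      ≤ ∑ j ∈ Finset.Icc 1 J, 4 * ((j:ℝ))⁻¹ := Finset.sum_le_sum hfib
    _ = 4 * ((harmonic J : ℚ) : ℝ) := by
        rw [← Finset.mul_sum]
        congr 1
        rw [harmonic_eq_sum_Icc]
        push_cast
        rfl
    _ ≤ 4 * (1 + Real.log J) := by
        have := harmonic_le_one_add_log J
        linarith

-- numeric facts
lemma log2_ge : (0.5:ℝ) ≤ Real.log 2 := by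
  rw [Real.le_log_iff_exp_le (by norm_num)]
  have h1 : Real.exp 0.5 * Real.exp 0.5 = Real.exp 1 := by
    rw [← Real.exp_add]; norm_num
  nlinarith [Real.exp_one_lt_d9, Real.exp_pos 0.5]

lemma log2_le : Real.log 2 ≤ 1 := by
  have := Real.log_le_sub_one_of_pos (show (0:ℝ) < 2 by norm_num)
  linarith

lemma logx_ge {x : ℝ} (hx : 3 ≤ x) : (1.09:ℝ) ≤ Real.log x := by
  rw [Real.le_log_iff_exp_le (by linarith)]
  have h1 : Real.exp 1.09 = Real.exp 1 * Real.exp 0.09 := by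
    rw [← Real.exp_add]; norm_num
  have h2 : (0.91:ℝ) ≤ Real.exp (-0.09) := by
    have := Real.add_one_le_exp (-0.09:ℝ); linarith
  have h3 : Real.exp 0.09 * Real.exp (-0.09) = 1 := by
    rw [← Real.exp_add]; norm_num
  have h4 : Real.exp 0.09 ≤ 1/0.91 := by
    rw [div_eq_mul_inv, one_mul]
    rw [show (0.91:ℝ)⁻¹ = (0.91:ℝ)⁻¹ from rfl]
    have h5 : (0:ℝ) < Real.exp (-0.09) := Real.exp_pos _
    nlinarith
  nlinarith [Real.exp_one_lt_d9, Real.exp_pos 1]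

lemma loglogx_ge {x : ℝ} (hx : 3 ≤ x) : (0.08:ℝ) ≤ Real.log (Real.log x) := by
  have h1 := logx_ge hx
  have h2 : (0:ℝ) < Real.log x := by linarith
  have h3 := Real.log_le_sub_one_of_pos (show (0:ℝ) < (Real.log x)⁻¹ by positivity)
  rw [Real.log_inv] at h3
  have h4 : (Real.log x)⁻¹ ≤ (1.09:ℝ)⁻¹ := inv_anti₀ (by norm_num) h1
  have h5 : ((1.09:ℝ))⁻¹ ≤ 0.92 := by norm_num
  nlinarith

/-- Duncan's theorem -/
theorem duncan_sum_bound (g : ℕ → ℝ) (hg0 : g 0 = 0) (hg1 : g 1 ≠ 0)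
    (hg : ∃ K : ℝ, ∀ n : ℕ, |g n| ≤ K * (2 : ℝ) ^ ((n : ℝ) / 2)) :
    ∃ C : ℝ, ∀ x : ℝ, 3 ≤ x →
      |∑ n ∈ Finset.Icc 1 ⌊x⌋₊,
        ∑ p ∈ n.primeFactors, g (n.factorization p)| ≤
      C * x * Real.log (Real.log x) := by
  obtain ⟨K, hK⟩ := hg
  have hK0 : 0 ≤ K := by
    have h := hK 0
    simp only [hg0, abs_zero, Nat.cast_zero, zero_div, Real.rpow_zero, mul_one] at h
    exact h
  refine ⟨936 * K, ?_⟩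
  intro x hx
  set N := ⌊x⌋₊ with hN
  have hxpos : (0:ℝ) < x := by linarith
  have hNx : (N : ℝ) ≤ x := Nat.floor_le hxpos.le
  have hN3 : 3 ≤ N := by
    rw [hN]
    exact Nat.le_floor (by exact_mod_cast hx)
  -- sqrt 2 facts
  set s2 := Real.sqrt 2 with hs2
  have hs2nn : 0 ≤ s2 := Real.sqrt_nonneg 2
  have hs2sq : s2 ^ 2 = 2 := Real.sq_sqrt (by norm_num)
  have hs2le : s2 ≤ 1.5 := by nlinarith
  have hs2ge : 1 ≤ s2 := by nlinarith
  set PB := (N+1).primesBelow with hPB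
  set L := Nat.log 2 (N+1) with hL
  -- step 1: abs into sums
  have step1 : |∑ n ∈ Finset.Icc 1 N, ∑ p ∈ n.primeFactors, g (n.factorization p)|
      ≤ ∑ n ∈ Finset.Icc 1 N, ∑ p ∈ n.primeFactors, |g (n.factorization p)| :=
    (Finset.abs_sum_le_sum_abs _ _).trans
      (Finset.sum_le_sum fun n _ => Finset.abs_sum_le_sum_abs _ _)
  -- step 2: pointwise bound and extension
  have step2 : ∀ n ∈ Finset.Icc 1 N, ∑ p ∈ n.primeFactors, |g (n.factorization p)|
      ≤ ∑ p ∈ PB, K * ∑ a ∈ Finset.Icc 1 N, (if p^a ∣ n then s2^a else 0) := by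
    intro n hn
    rw [Finset.mem_Icc] at hn
    have hn0 : n ≠ 0 := by omega
    have hsub : n.primeFactors ⊆ PB := by
      intro p hp
      rw [hPB, Nat.mem_primesBelow]
      have h1 := Nat.prime_of_mem_primeFactors hp
      have h2 := Nat.le_of_mem_primeFactors hp
      exact ⟨by omega, h1⟩
    have hpt : ∀ p ∈ n.primeFactors, |g (n.factorization p)|
        ≤ K * ∑ a ∈ Finset.Icc 1 N, (if p^a ∣ n then s2^a else 0) := by
      intro p hp
      have hprime := Nat.prime_of_mem_primeFactors hp
      set ν := n.factorization p with hν
      have hν1 : 1 ≤ ν := by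
        rw [hν]
        exact (Nat.Prime.factorization_pos_of_dvd hprime hn0
          (Nat.dvd_of_mem_primeFactors hp))
      have hνN : ν ≤ N := by
        have hd : p ^ ν ∣ n := Nat.ordProj_dvd n p
        have hle : p ^ ν ≤ n := Nat.le_of_dvd (by omega) hd
        have h2 : 2 ^ ν ≤ p ^ ν := Nat.pow_le_pow_left hprime.two_le ν
        have h3 : ν < 2 ^ ν := Nat.lt_two_pow_self
        omega
      have heq : (2:ℝ) ^ ((ν:ℝ)/2) = s2 ^ ν := by
        rw [hs2, Real.sqrt_eq_rpow, ← Real.rpow_natCast ((2:ℝ) ^ ((1:ℝ)/2)) ν,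
          ← Real.rpow_mul (by norm_num)]
        congr 1
        ring
      have hbig : s2 ^ ν ≤ ∑ a ∈ Finset.Icc 1 N, (if p^a ∣ n then s2^a else 0) := by
        have hmem : ν ∈ Finset.Icc 1 N := Finset.mem_Icc.mpr ⟨hν1, hνN⟩
        calc s2 ^ ν = (if p^ν ∣ n then s2^ν else 0) := (if_pos (Nat.ordProj_dvd n p)).symm
          _ ≤ ∑ a ∈ Finset.Icc 1 N, (if p^a ∣ n then s2^a else 0) :=
            Finset.single_le_sum (f := fun a => if p^a ∣ n then s2^a else 0)
              (fun a _ => by positivity) hmem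
      calc |g ν| ≤ K * (2:ℝ) ^ ((ν:ℝ)/2) := hK ν
        _ = K * s2 ^ ν := by rw [heq]
        _ ≤ K * ∑ a ∈ Finset.Icc 1 N, (if p^a ∣ n then s2^a else 0) :=
            mul_le_mul_of_nonneg_left hbig hK0
    calc ∑ p ∈ n.primeFactors, |g (n.factorization p)|
        ≤ ∑ p ∈ n.primeFactors, K * ∑ a ∈ Finset.Icc 1 N, (if p^a ∣ n then s2^a else 0) :=
          Finset.sum_le_sum hpt
      _ ≤ ∑ p ∈ PB, K * ∑ a ∈ Finset.Icc 1 N, (if p^a ∣ n then s2^a else 0) := by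
          apply Finset.sum_le_sum_of_subset_of_nonneg hsub
          intro p _ _
          have : (0:ℝ) ≤ ∑ a ∈ Finset.Icc 1 N, (if p^a ∣ n then s2^a else 0) :=
            Finset.sum_nonneg fun a _ => by positivity
          positivity
  -- step 3: swap and bound by 6N/p
  have step3 : ∑ n ∈ Finset.Icc 1 N, ∑ p ∈ PB, K * ∑ a ∈ Finset.Icc 1 N,
      (if p^a ∣ n then s2^a else 0) ≤ K * (6 * N * ∑ p ∈ PB, ((p:ℝ))⁻¹) := by
    rw [Finset.sum_comm]
    have hinner : ∀ p ∈ PB, ∑ n ∈ Finset.Icc 1 N, K * ∑ a ∈ Finset.Icc 1 N,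
        (if p^a ∣ n then s2^a else 0) ≤ K * (6 * N * ((p:ℝ))⁻¹) := by
      intro p hp
      rw [hPB, Nat.mem_primesBelow] at hp
      have hp2 : 2 ≤ p := hp.2.two_le
      have hp2R : (2:ℝ) ≤ (p:ℝ) := by exact_mod_cast hp2
      rw [← Finset.mul_sum]
      apply mul_le_mul_of_nonneg_left ?_ hK0
      rw [Finset.sum_comm]
      have hcount : ∀ a ∈ Finset.Icc 1 N, ∑ n ∈ Finset.Icc 1 N,
          (if p^a ∣ n then s2^a else 0) ≤ (N:ℝ) * (s2/p)^a := by
        intro a ha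
        rw [← Finset.sum_filter, Finset.sum_const, nsmul_eq_mul]
        have hc := countL N (p^a)
        have hpa : (0:ℝ) < (p:ℝ)^a := by positivity
        calc (((Finset.Icc 1 N).filter (fun n => p^a ∣ n)).card : ℝ) * s2^a
            ≤ ((N:ℝ) / (p^a : ℕ)) * s2^a := by
              apply mul_le_mul_of_nonneg_right ?_ (by positivity)
              exact hc
          _ = (N:ℝ) * (s2/p)^a := by
              push_cast
              rw [div_pow]
              ring
      have hgeo : ∑ a ∈ Finset.Icc 1 N, (N:ℝ) * (s2/p)^a ≤ (N:ℝ) * (6 * ((p:ℝ))⁻¹) := by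
        rw [← Finset.mul_sum]
        apply mul_le_mul_of_nonneg_left ?_ (by positivity)
        have hr0 : (0:ℝ) ≤ s2/p := by positivity
        have hr1 : s2/p < 1 := by
          rw [div_lt_one (by linarith)]
          linarith
        refine (geomL hr0 hr1 N).trans ?_
        have hpd : (0:ℝ) < (p:ℝ) := by linarith
        have hps : (0:ℝ) < (p:ℝ) - s2 := by linarith
        have he : s2/(p:ℝ)/(1 - s2/(p:ℝ)) = s2/((p:ℝ) - s2) := by
          field_simp
        rw [he, show 6 * ((p:ℝ))⁻¹ = 6/(p:ℝ) from (div_eq_mul_inv 6 _).symm,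
          div_le_div_iff₀ hps hpd]
        have hsp : s2 * (p:ℝ) ≤ 1.5 * (p:ℝ) := mul_le_mul_of_nonneg_right hs2le hpd.le
        linarith
      calc ∑ a ∈ Finset.Icc 1 N, ∑ n ∈ Finset.Icc 1 N, (if p^a ∣ n then s2^a else 0)
          ≤ ∑ a ∈ Finset.Icc 1 N, (N:ℝ) * (s2/p)^a := Finset.sum_le_sum hcount
        _ ≤ (N:ℝ) * (6 * ((p:ℝ))⁻¹) := hgeo
        _ = 6 * N * ((p:ℝ))⁻¹ := by ring
    calc ∑ p ∈ PB, ∑ n ∈ Finset.Icc 1 N, K * ∑ a ∈ Finset.Icc 1 N,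
        (if p^a ∣ n then s2^a else 0) ≤ ∑ p ∈ PB, K * (6 * N * ((p:ℝ))⁻¹) :=
          Finset.sum_le_sum hinner
      _ = K * (6 * N * ∑ p ∈ PB, ((p:ℝ))⁻¹) := by
          simp only [Finset.mul_sum]
  -- numeric facts
  have hlog2a := log2_ge
  have hlog2b := log2_le
  have hlx := logx_ge hx
  have hdel := loglogx_ge hx
  set δ := Real.log (Real.log x) with hδ
  have hLnn : (0:ℝ) ≤ (L:ℝ) := Nat.cast_nonneg L
  have hL1 : (1:ℝ) ≤ (L:ℝ) := by
    have : 0 < L := Nat.log_pos one_lt_two (by omega)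
    exact_mod_cast this
  have h2L : ((2:ℝ))^L ≤ 2 * x := by
    have h1 : (2:ℕ)^L ≤ N + 1 := Nat.pow_log_le_self 2 (by omega)
    have h2 : ((2:ℕ)^L : ℝ) ≤ (N:ℝ) + 1 := by exact_mod_cast h1
    push_cast at h2
    linarith
  have hLb : (L:ℝ) * Real.log 2 ≤ Real.log 2 + Real.log x := by
    have h1 : Real.log ((2:ℝ)^L) ≤ Real.log (2 * x) :=
      Real.log_le_log (by positivity) h2L
    rw [Real.log_pow, Real.log_mul (by norm_num) (by linarith)] at h1
    exact_mod_cast h1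
  have hL4 : (L:ℝ) ≤ 4 * Real.log x := by
    nlinarith [mul_nonneg hLnn (show (0:ℝ) ≤ Real.log 2 - 0.5 by linarith)]
  have hlogL : Real.log L ≤ 2 + δ := by
    have h1 : Real.log L ≤ Real.log (4 * Real.log x) :=
      Real.log_le_log (by linarith) hL4
    rw [Real.log_mul (by norm_num) (by linarith)] at h1
    have h2 : Real.log 4 ≤ 2 := by
      rw [show (4:ℝ) = 2^2 by norm_num, Real.log_pow]
      push_cast
      linarith
    linarith
  have hlogLnn : 0 ≤ Real.log L := Real.log_nonneg hL1
  have h39 : 1 + Real.log L ≤ 39 * δ := by nlinarith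
  have hrecip : ∑ p ∈ PB, ((p:ℝ))⁻¹ ≤ 4 * (1 + Real.log L) := recipL (N+1)
  have hPBnn : (0:ℝ) ≤ ∑ p ∈ PB, ((p:ℝ))⁻¹ :=
    Finset.sum_nonneg fun p _ => by positivity
  calc |∑ n ∈ Finset.Icc 1 N, ∑ p ∈ n.primeFactors, g (n.factorization p)|
      ≤ ∑ n ∈ Finset.Icc 1 N, ∑ p ∈ n.primeFactors, |g (n.factorization p)| := step1
    _ ≤ ∑ n ∈ Finset.Icc 1 N, ∑ p ∈ PB, K * ∑ a ∈ Finset.Icc 1 N,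
        (if p^a ∣ n then s2^a else 0) := Finset.sum_le_sum step2
    _ ≤ K * (6 * N * ∑ p ∈ PB, ((p:ℝ))⁻¹) := step3
    _ ≤ K * (6 * N * (4 * (1 + Real.log L))) := by
        apply mul_le_mul_of_nonneg_left ?_ hK0
        apply mul_le_mul_of_nonneg_left hrecip (by positivity)
    _ = 24 * K * ((N:ℝ) * (1 + Real.log L)) := by ring
    _ ≤ 24 * K * (x * (39 * δ)) := by
        apply mul_le_mul_of_nonneg_left ?_ (by positivity)
        apply mul_le_mul hNx h39 (by linarith) (by linarith)
    _ = 936 * K * x * δ := by ring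
end
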